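/- Let ω be a control on [0,T], p ∈ [1,3), X ∈ C^p_ω([0,T],ℝ^d), and let 𝕏̃ : Δ_T → ℝ^d ⊗ ℝ^d satisfy |𝕏̃_{st}| ≤ C ω(s,t)^{2/p} and |𝕏̃_{st} − 𝕏̃_{su} − X_{su} ⊗ X_{ut} − 𝕏̃_{ut}| ≤ C ω(s,t)^θ for some constants C ≥ 0 and θ > 1 and all 0 ≤ s ≤ u ≤ t ≤ T (an almost rough path). Then there exists a unique continuous 𝕏 : Δ_T → ℝ^d ⊗ ℝ^d such that (X,𝕏) is a p-rough path controlled by ω and |𝕏_{st} − 𝕏̃_{st}| ≤ C' ω(s,t)^θ for some constant C'. If in addition |X^α_{st} X^β_{st} − 𝕏̃^{αβ}_{st} − 𝕏̃^{βα}_{st}| ≤ C ω(s,t)^θ for all α,β and all 0 ≤ s ≤ t ≤ T, then (X,𝕏) is geometric. -/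

import Mathlib

open Filter Topology Set

noncomputable section

/-- `ω` is a control on `[0,T]`: continuous on the simplex, vanishing on the diagonal,
superadditive and nonnegative. -/
def IsControl (T : ℝ) (ω : ℝ → ℝ → ℝ) : Prop :=
  ContinuousOn (fun q : ℝ × ℝ => ω q.1 q.2) {q : ℝ × ℝ | 0 ≤ q.1 ∧ q.1 ≤ q.2 ∧ q.2 ≤ T} ∧
    (∀ t : ℝ, 0 ≤ t → t ≤ T → ω t t = 0) ∧
    (∀ s u t : ℝ, 0 ≤ s → s ≤ u → u ≤ t → t ≤ T → ω s u + ω u t ≤ ω s t) ∧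
    (∀ s t : ℝ, 0 ≤ s → s ≤ t → t ≤ T → 0 ≤ ω s t)

/-- Membership in `C^{1/r}_ω([0,T],V)`: continuity on `[0,T]` together with the increment
bound `‖Y_t − Y_s‖ ≤ C ω(s,t)^r`. -/
def HolderPath (T r : ℝ) (ω : ℝ → ℝ → ℝ) {V : Type*} [NormedAddCommGroup V]
    (Y : ℝ → V) : Prop :=
  ContinuousOn Y (Set.Icc 0 T) ∧
    ∃ C : ℝ, ∀ s t : ℝ, 0 ≤ s → s ≤ t → t ≤ T → ‖Y t - Y s‖ ≤ C * ω s t ^ r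

/-- `(X, XX)` is a `p`-rough path controlled by `ω` on `[0,T]`. -/
def IsRoughPath (T p : ℝ) (ω : ℝ → ℝ → ℝ) {d : ℕ}
    (X : ℝ → Fin d → ℝ) (XX : ℝ → ℝ → Fin d → Fin d → ℝ) : Prop :=
  HolderPath T (1 / p) ω X ∧
    ContinuousOn (fun q : ℝ × ℝ => XX q.1 q.2) {q : ℝ × ℝ | 0 ≤ q.1 ∧ q.1 ≤ q.2 ∧ q.2 ≤ T} ∧
    (∃ C : ℝ, ∀ s t : ℝ, 0 ≤ s → s ≤ t → t ≤ T → ‖XX s t‖ ≤ C * ω s t ^ (2 / p)) ∧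
    (∀ s u t : ℝ, 0 ≤ s → s ≤ u → u ≤ t → t ≤ T → ∀ α β : Fin d,
      XX s t α β = XX s u α β + (X u α - X s α) * (X t β - X u β) + XX u t α β)

/-- `(H, H')` is an `X`-controlled path with values in `V`; `H' t γ` is the Gubinelli
derivative at time `t` in the direction of the `γ`-th coordinate. -/
def IsControlledPath (T p : ℝ) (ω : ℝ → ℝ → ℝ) {d : ℕ} (X : ℝ → Fin d → ℝ)
    {V : Type*} [NormedAddCommGroup V] [NormedSpace ℝ V]
    (H : ℝ → V) (H' : ℝ → Fin d → V) : Prop :=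
  HolderPath T (1 / p) ω H ∧ HolderPath T (1 / p) ω H' ∧
    ∃ C : ℝ, ∀ s t : ℝ, 0 ≤ s → s ≤ t → t ≤ T →
      ‖H t - H s - ∑ γ, (X t γ - X s γ) • H' s γ‖ ≤ C * ω s t ^ (2 / p)

/-- The bracket `[𝐗]` of the rough path `(X, XX)`. -/
def bracket {d : ℕ} (X : ℝ → Fin d → ℝ) (XX : ℝ → ℝ → Fin d → Fin d → ℝ)
    (s t : ℝ) (α β : Fin d) : ℝ :=
  (X t α - X s α) * (X t β - X s β) - (XX s t α β + XX s t β α)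

/-- A partition of `[s,t]` into `n` consecutive intervals. -/
structure RPartition (s t : ℝ) where
  n : ℕ
  pts : ℕ → ℝ
  mono : Monotone pts
  first : pts 0 = s
  last : pts n = t

/-- The mesh of a partition. -/
def RPartition.mesh {s t : ℝ} (π : RPartition s t) : ℝ :=
  ⨆ i : Fin π.n, (π.pts (i.1 + 1) - π.pts i.1)

/-- The Riemann sum of a two-parameter summand along a partition. -/
def riemannSum {s t : ℝ} {V : Type*} [AddCommMonoid V]
    (π : RPartition s t) (f : ℝ → ℝ → V) : V :=
  ∑ i ∈ Finset.range π.n, f (π.pts i) (π.pts (i + 1))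

/-- `L` is the limit of the Riemann sums of `f` along every sequence of partitions of `[s,t]`
with mesh tending to `0`. -/
def RSumLimit {V : Type*} [AddCommMonoid V] [TopologicalSpace V] (s t : ℝ)
    (f : ℝ → ℝ → V) (L : V) : Prop :=
  ∀ π : ℕ → RPartition s t,
    Tendsto (fun n => (π n).mesh) atTop (𝓝 0) →
      Tendsto (fun n => riemannSum (π n) f) atTop (𝓝 L)

/-- The compensated Riemann summand `H_u X_{uv} + H'_u 𝕏_{uv}` of a controlled integrand
against a rough path. -/
def roughSummand {d e : ℕ} (X : ℝ → Fin d → ℝ) (XX : ℝ → ℝ → Fin d → Fin d → ℝ)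
    (H : ℝ → Fin e → Fin d → ℝ) (H' : ℝ → Fin d → Fin e → Fin d → ℝ) :
    ℝ → ℝ → Fin e → ℝ :=
  fun u v k => (∑ γ, H u k γ * (X v γ - X u γ)) + ∑ α, ∑ β, H' u α k β * XX u v α β

/-- The partial derivative `∂_α f^i (x)`. -/
def pderiv {m n : ℕ} (f : (Fin m → ℝ) → (Fin n → ℝ)) (x : Fin m → ℝ)
    (α : Fin m) (i : Fin n) : ℝ :=
  fderiv ℝ f x (Pi.single α 1) i

/-- The second partial derivative `∂_{αβ} f^k (x)`. -/
def pderiv2 {m n : ℕ} (f : (Fin m → ℝ) → (Fin n → ℝ)) (x : Fin m → ℝ)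
    (α β : Fin m) (k : Fin n) : ℝ :=
  fderiv ℝ (fun y => fderiv ℝ f y (Pi.single β 1) k) x (Pi.single α 1)

namespace Sew

variable {d : ℕ}

/-- last element of `a :: l`. -/
def lastP (a : ℝ) (l : List ℝ) : ℝ := l.getLastD a

open Classical in
noncomputable def midPt (ω : ℝ → ℝ → ℝ) (s t : ℝ) : ℝ :=
  if h : ∃ u, s ≤ u ∧ u ≤ t ∧ ω s u ≤ ω s t / 2 ∧ ω u t ≤ ω s t / 2 then h.choose else s

def Mf (X : ℝ → Fin d → ℝ) (s a b : ℝ) : Fin d → Fin d → ℝ :=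
  fun α β => (X a α - X s α) * (X b β - X a β)

def SS (X : ℝ → Fin d → ℝ) (Xt : ℝ → ℝ → Fin d → Fin d → ℝ) (s : ℝ) :
    List ℝ → (Fin d → Fin d → ℝ)
  | a :: b :: l => (Xt a b + Mf X s a b) + SS X Xt s (b :: l)
  | _ => 0

noncomputable def PP (ω : ℝ → ℝ → ℝ) : ℕ → ℝ → ℝ → List ℝ
  | 0, s, t => [s, t]
  | (n+1), s, t => PP ω n s (midPt ω s t) ++ PP ω n (midPt ω s t) t

variable {X : ℝ → Fin d → ℝ} {Xt : ℝ → ℝ → Fin d → Fin d → ℝ}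

lemma lastP_cons (a b : ℝ) (l : List ℝ) : lastP a (b :: l) = lastP b l :=
  List.getLastD_cons

lemma lastP_append (l₁ : List ℝ) (a b : ℝ) (l₂ : List ℝ) :
    lastP a (l₁ ++ b :: l₂) = lastP b l₂ := by
  induction l₁ generalizing a with
  | nil => simp [lastP_cons]
  | cons c l ih => simpa [lastP_cons] using ih c

lemma lastP_mem (a : ℝ) (l : List ℝ) : lastP a l ∈ a :: l :=
  List.getLastD_mem_cons

lemma SS_nil (s : ℝ) : SS X Xt s [] = 0 := rfl

lemma SS_single (s a : ℝ) : SS X Xt s [a] = 0 := rfl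

lemma SS_cons (s a b : ℝ) (l : List ℝ) :
    SS X Xt s (a :: b :: l) = (Xt a b + Mf X s a b) + SS X Xt s (b :: l) := rfl

lemma SS_append (s : ℝ) (l₁ : List ℝ) (b : ℝ) (l₂ : List ℝ) :
    SS X Xt s (l₁ ++ b :: l₂) = SS X Xt s (l₁ ++ [b]) + SS X Xt s (b :: l₂) := by
  induction l₁ with
  | nil => simp [SS_single]
  | cons a l ih =>
    cases l with
    | nil => simp [SS_cons, SS_single, SS_nil]
    | cons c l' =>
      simp only [List.cons_append, SS_cons] at *
      rw [ih]; abel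

lemma SS_snoc (s : ℝ) (l : List ℝ) (a b : ℝ) :
    SS X Xt s ((a :: l) ++ [b]) =
      SS X Xt s (a :: l) + (Xt (lastP a l) b + Mf X s (lastP a l) b) := by
  induction l generalizing a with
  | nil => simp [lastP, SS_cons, SS_single, SS_nil]
  | cons c l' ih =>
    simp only [List.cons_append, SS_cons, lastP_cons] at *
    rw [ih c]; abel

lemma SS_base (s u : ℝ) (l : List ℝ) (a : ℝ) :
    SS X Xt s (a :: l) = SS X Xt u (a :: l) +
      fun α β => (X u α - X s α) * (X (lastP a l) β - X a β) := by
  induction l generalizing a with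
  | nil =>
    funext α β
    simp [SS_single, lastP]
  | cons b l' ih =>
    funext α β
    have h := congrFun (congrFun (ih b) α) β
    simp only [SS_cons, lastP_cons, Pi.add_apply, Mf] at *
    rw [h]; ring

section Est

variable {T p C θ : ℝ} {ω : ℝ → ℝ → ℝ}

lemma Mf_diag (X : ℝ → Fin d → ℝ) (s a : ℝ) : Mf X s a a = 0 := by
  funext α β; simp [Mf]

lemma Xt_diag (hC : 0 ≤ C)
    (hω0 : ∀ t : ℝ, 0 ≤ t → t ≤ T → ω t t = 0) (hq : (2:ℝ)/p ≠ 0)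
    (hbound : ∀ s t : ℝ, 0 ≤ s → s ≤ t → t ≤ T → ‖Xt s t‖ ≤ C * ω s t ^ (2 / p))
    {a : ℝ} (h0 : 0 ≤ a) (hT : a ≤ T) : Xt a a = 0 := by
  have h := hbound a a h0 le_rfl hT
  rw [hω0 a h0 hT, Real.zero_rpow hq, mul_zero] at h
  exact norm_le_zero_iff.1 h

lemma insert_est
    (hC : 0 ≤ C)
    (hω0 : ∀ t : ℝ, 0 ≤ t → t ≤ T → ω t t = 0)
    (hsup : ∀ s u t : ℝ, 0 ≤ s → s ≤ u → u ≤ t → t ≤ T → ω s u + ω u t ≤ ω s t)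
    (hnn : ∀ s t : ℝ, 0 ≤ s → s ≤ t → t ≤ T → 0 ≤ ω s t)
    (hθ0 : 0 ≤ θ) (hq : (2:ℝ)/p ≠ 0)
    (hbound : ∀ s t : ℝ, 0 ≤ s → s ≤ t → t ≤ T → ‖Xt s t‖ ≤ C * ω s t ^ (2 / p))
    (hchen : ∀ s u t : ℝ, 0 ≤ s → s ≤ u → u ≤ t → t ≤ T →
      ‖Xt s t - Xt s u - Mf X s u t - Xt u t‖ ≤ C * ω s t ^ θ)
    (ε : ℝ) (hε : 0 ≤ ε) (x s : ℝ) :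
    ∀ (l : List ℝ) (a : ℝ), List.Pairwise (· ≤ ·) (a :: l) →
      (∀ y ∈ a :: l, 0 ≤ y ∧ y ≤ T) →
      List.IsChain (fun u v => ω u v ≤ ε) (a :: l) →
      a ≤ x → x ≤ lastP a l →
      ∃ l' : List ℝ, List.orderedInsert (· ≤ ·) x (a :: l) = a :: l' ∧
        lastP a l' = lastP a l ∧
        List.IsChain (fun u v => ω u v ≤ ε) (a :: l') ∧
        ‖SS X Xt s (a :: l') - SS X Xt s (a :: l)‖ ≤ C * ε ^ θ := by
  have hCε : 0 ≤ C * ε ^ θ := mul_nonneg hC (Real.rpow_nonneg hε θ)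
  intro l
  induction l with
  | nil =>
    intro a _ hmem _ hax hxa
    have hxaeq : x = a := le_antisymm (by simpa [lastP] using hxa) hax
    subst hxaeq
    refine ⟨[x], by simp [List.orderedInsert], by simp [lastP_cons, lastP], ?_, ?_⟩
    · refine List.isChain_cons_cons.2 ⟨?_, by simp⟩
      rw [hω0 x (hmem x (by simp)).1 (hmem x (by simp)).2]; exact hε
    · rw [SS_cons, SS_single, Xt_diag hC hω0 hq hbound (hmem x (by simp)).1
        (hmem x (by simp)).2, Mf_diag]
      simpa using hCε
  | cons b l'' ih =>
    intro a hsort hmem hchain hax hxa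
    by_cases hxb : x ≤ a
    · have hxaeq : x = a := le_antisymm hxb hax
      subst hxaeq
      refine ⟨x :: b :: l'', by simp [List.orderedInsert], lastP_cons _ _ _, ?_, ?_⟩
      · refine List.isChain_cons_cons.2 ⟨?_, hchain⟩
        rw [hω0 x (hmem x (by simp)).1 (hmem x (by simp)).2]; exact hε
      · rw [SS_cons, Xt_diag hC hω0 hq hbound (hmem x (by simp)).1
          (hmem x (by simp)).2, Mf_diag]
        simpa using hCε
    · have hax' : a < x := lt_of_not_ge hxb
      by_cases hxb2 : x ≤ b
      · -- insert between a and b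
        have h0a : 0 ≤ a := (hmem a (by simp)).1
        have hbT : b ≤ T := (hmem b (by simp)).2
        have hab : a ≤ b := le_trans hax'.le hxb2
        have hωab : ω a b ≤ ε := (List.isChain_cons_cons.1 hchain).1
        have hωab0 : 0 ≤ ω a b := hnn a b h0a hab hbT
        have heq : List.orderedInsert (· ≤ ·) x (a :: b :: l'') = a :: x :: b :: l'' := by
          simp [List.orderedInsert, hxb, hxb2]
        refine ⟨x :: b :: l'', heq, by simp [lastP_cons], ?_, ?_⟩
        · refine List.isChain_cons_cons.2 ⟨?_, List.isChain_cons_cons.2 ⟨?_, (List.isChain_cons_cons.1 hchain).2⟩⟩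
          · have := hsup a x b h0a hax'.le hxb2 hbT
            have := hnn x b (le_trans h0a hax'.le) hxb2 hbT
            linarith
          · have := hsup a x b h0a hax'.le hxb2 hbT
            have := hnn a x h0a hax'.le (le_trans hxb2 hbT)
            linarith
        · have hdiff : SS X Xt s (a :: x :: b :: l'') - SS X Xt s (a :: b :: l'')
              = -(Xt a b - Xt a x - Mf X a x b - Xt x b) := by
            funext α β
            simp only [SS_cons, Mf, Pi.add_apply, Pi.sub_apply, Pi.neg_apply]
            ring
          rw [hdiff, norm_neg]
          calc ‖Xt a b - Xt a x - Mf X a x b - Xt x b‖ ≤ C * ω a b ^ θ :=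
                hchen a x b h0a hax'.le hxb2 hbT
            _ ≤ C * ε ^ θ := by
                exact mul_le_mul_of_nonneg_left (Real.rpow_le_rpow hωab0 hωab hθ0) hC
      · -- recurse into tail
        have hxb' : b < x := lt_of_not_ge hxb2
        have hxlast : x ≤ lastP b l'' := by rwa [lastP_cons] at hxa
        obtain ⟨l₂, heq, hlast, hchain₂, hnorm⟩ :=
          ih b hsort.of_cons (fun y hy => hmem y (List.mem_cons_of_mem a hy))
            (List.isChain_cons_cons.1 hchain).2 hxb'.le hxlast
        have heq' : List.orderedInsert (· ≤ ·) x (a :: b :: l'') = a :: b :: l₂ := by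
          rw [List.orderedInsert, if_neg hxb, heq]
        refine ⟨b :: l₂, heq', by rw [lastP_cons, hlast, lastP_cons], ?_, ?_⟩
        · exact List.isChain_cons_cons.2 ⟨(List.isChain_cons_cons.1 hchain).1, hchain₂⟩
        · have : SS X Xt s (a :: b :: l₂) - SS X Xt s (a :: b :: l'')
              = SS X Xt s (b :: l₂) - SS X Xt s (b :: l'') := by
            rw [SS_cons, SS_cons]; abel
          rw [this]; exact hnorm

lemma foldr_perm : ∀ (extra l : List ℝ),
    List.Perm (List.foldr (List.orderedInsert (· ≤ ·)) l extra) (extra ++ l) := by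
  intro extra
  induction extra with
  | nil => intro l; simp
  | cons x e ih =>
    intro l
    simpa using (List.perm_orderedInsert _ x _).trans ((ih l).cons x)

lemma fold_est
    (hC : 0 ≤ C)
    (hω0 : ∀ t : ℝ, 0 ≤ t → t ≤ T → ω t t = 0)
    (hsup : ∀ s u t : ℝ, 0 ≤ s → s ≤ u → u ≤ t → t ≤ T → ω s u + ω u t ≤ ω s t)
    (hnn : ∀ s t : ℝ, 0 ≤ s → s ≤ t → t ≤ T → 0 ≤ ω s t)
    (hθ0 : 0 ≤ θ) (hq : (2:ℝ)/p ≠ 0)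
    (hbound : ∀ s t : ℝ, 0 ≤ s → s ≤ t → t ≤ T → ‖Xt s t‖ ≤ C * ω s t ^ (2 / p))
    (hchen : ∀ s u t : ℝ, 0 ≤ s → s ≤ u → u ≤ t → t ≤ T →
      ‖Xt s t - Xt s u - Mf X s u t - Xt u t‖ ≤ C * ω s t ^ θ)
    (ε : ℝ) (hε : 0 ≤ ε) (s : ℝ) :
    ∀ (extra : List ℝ) (l : List ℝ) (a : ℝ), List.Pairwise (· ≤ ·) (a :: l) →
      (∀ y ∈ a :: l, 0 ≤ y ∧ y ≤ T) →
      List.IsChain (fun u v => ω u v ≤ ε) (a :: l) →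
      (∀ x ∈ extra, a ≤ x ∧ x ≤ lastP a l) →
      ∃ l' : List ℝ, List.foldr (List.orderedInsert (· ≤ ·)) (a :: l) extra = a :: l' ∧
        lastP a l' = lastP a l ∧
        List.Pairwise (· ≤ ·) (a :: l') ∧
        (∀ y ∈ a :: l', 0 ≤ y ∧ y ≤ T) ∧
        List.IsChain (fun u v => ω u v ≤ ε) (a :: l') ∧
        ‖SS X Xt s (a :: l') - SS X Xt s (a :: l)‖ ≤ C * extra.length * ε ^ θ := by
  intro extra
  induction extra with
  | nil =>
    intro l a hs hm hc _
    exact ⟨l, rfl, rfl, hs, hm, hc, by simp⟩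
  | cons x e ihe =>
    intro l a hs hm hc hex
    obtain ⟨l₁, heq₁, hlast₁, hs₁, hm₁, hc₁, hn₁⟩ :=
      ihe l a hs hm hc (fun y hy => hex y (List.mem_cons_of_mem x hy))
    have hx := hex x (List.mem_cons_self)
    obtain ⟨l₂, heq₂, hlast₂, hc₂, hn₂⟩ :=
      insert_est hC hω0 hsup hnn hθ0 hq hbound hchen ε hε x s l₁ a hs₁ hm₁ hc₁
        hx.1 (by rw [hlast₁]; exact hx.2)
    have heq : List.foldr (List.orderedInsert (· ≤ ·)) (a :: l) (x :: e) = a :: l₂ := by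
      simp only [List.foldr_cons, heq₁, heq₂]
    refine ⟨l₂, heq, by rw [hlast₂, hlast₁], ?_, ?_, hc₂, ?_⟩
    · rw [← heq₂]; exact hs₁.orderedInsert x _
    · intro y hy
      rw [← heq₂] at hy
      rcases (List.mem_orderedInsert _).1 hy with h | h
      · subst h
        have h0a : 0 ≤ a := (hm a (by simp)).1
        have hlm := hm (lastP a l) (lastP_mem a l)
        exact ⟨le_trans h0a hx.1, le_trans hx.2 hlm.2⟩
      · exact hm₁ y h
    · have htri := dist_triangle (SS X Xt s (a :: l₂)) (SS X Xt s (a :: l₁)) (SS X Xt s (a :: l))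
      rw [dist_eq_norm, dist_eq_norm, dist_eq_norm] at htri
      have hCε : (0:ℝ) ≤ ε ^ θ := Real.rpow_nonneg hε θ
      have : (List.length (x :: e) : ℝ) = (e.length : ℝ) + 1 := by
        simp [List.length_cons]
      rw [this]
      nlinarith [hn₂, hn₁, htri]

end Est


lemma SS_glue (s u t : ℝ) (l₁ l₂ : List ℝ) (h₁ : lastP s l₁ = u) (h₂ : lastP u l₂ = t)
    (hXt0 : Xt u u = 0) :
    SS X Xt s ((s :: l₁) ++ (u :: l₂)) =
      SS X Xt s (s :: l₁) + Mf X s u t + SS X Xt u (u :: l₂) := by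
  rw [SS_append, SS_snoc, h₁, hXt0, Mf_diag (X := X), SS_base s u l₂ u, h₂]
  have : (fun α β => (X u α - X s α) * (X t β - X u β)) = Mf X s u t := rfl
  rw [this]
  abel


section PPsec

variable {T : ℝ} {ω : ℝ → ℝ → ℝ}

lemma getLast?_eq_lastP : ∀ (l : List ℝ) (a : ℝ), (a :: l).getLast? = some (lastP a l) := by
  intro l
  induction l with
  | nil => intro a; simp [lastP]
  | cons b l ih => intro a; rw [List.getLast?_cons_cons, ih b, lastP_cons]

lemma midPt_spec
    (hcont : ContinuousOn (fun q : ℝ × ℝ => ω q.1 q.2) {q : ℝ × ℝ | 0 ≤ q.1 ∧ q.1 ≤ q.2 ∧ q.2 ≤ T})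
    (hω0 : ∀ t : ℝ, 0 ≤ t → t ≤ T → ω t t = 0)
    (hsup : ∀ s u t : ℝ, 0 ≤ s → s ≤ u → u ≤ t → t ≤ T → ω s u + ω u t ≤ ω s t)
    (hnn : ∀ s t : ℝ, 0 ≤ s → s ≤ t → t ≤ T → 0 ≤ ω s t)
    {s t : ℝ} (h0 : 0 ≤ s) (hst : s ≤ t) (hT : t ≤ T) :
    s ≤ midPt ω s t ∧ midPt ω s t ≤ t ∧ ω s (midPt ω s t) ≤ ω s t / 2 ∧
      ω (midPt ω s t) t ≤ ω s t / 2 := by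
  have hex : ∃ u, s ≤ u ∧ u ≤ t ∧ ω s u ≤ ω s t / 2 ∧ ω u t ≤ ω s t / 2 := by
    have hmap : ∀ u ∈ Icc s t, ((s, u) : ℝ × ℝ) ∈ {q : ℝ × ℝ | 0 ≤ q.1 ∧ q.1 ≤ q.2 ∧ q.2 ≤ T} :=
      fun u hu => ⟨h0, hu.1, le_trans hu.2 hT⟩
    have hc : ContinuousOn (fun u => ω s u) (Icc s t) :=
      hcont.comp ((continuous_const.prodMk continuous_id).continuousOn) hmap
    have h1 : ω s t / 2 ∈ Icc (ω s s) (ω s t) := by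
      have h2 := hnn s t h0 hst hT
      rw [hω0 s h0 (le_trans hst hT)]
      constructor <;> [positivity; linarith]
    obtain ⟨u, hu, hfu⟩ := intermediate_value_Icc hst hc h1
    refine ⟨u, hu.1, hu.2, le_of_eq hfu, ?_⟩
    replace hfu : ω s u = ω s t / 2 := hfu
    have h3 := hsup s u t h0 hu.1 hu.2 hT
    rw [hfu] at h3
    linarith
  rw [midPt, dif_pos hex]
  exact hex.choose_spec

lemma PP_length (ω : ℝ → ℝ → ℝ) : ∀ (n : ℕ) (s t : ℝ), (PP ω n s t).length = 2 ^ (n + 1) := by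
  intro n
  induction n with
  | zero => intro s t; simp [PP]
  | succ n ih => intro s t; simp [PP, ih, pow_succ]; ring

lemma PP_spec
    (hcont : ContinuousOn (fun q : ℝ × ℝ => ω q.1 q.2) {q : ℝ × ℝ | 0 ≤ q.1 ∧ q.1 ≤ q.2 ∧ q.2 ≤ T})
    (hω0 : ∀ t : ℝ, 0 ≤ t → t ≤ T → ω t t = 0)
    (hsup : ∀ s u t : ℝ, 0 ≤ s → s ≤ u → u ≤ t → t ≤ T → ω s u + ω u t ≤ ω s t)
    (hnn : ∀ s t : ℝ, 0 ≤ s → s ≤ t → t ≤ T → 0 ≤ ω s t) :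
    ∀ (n : ℕ) {s t : ℝ}, 0 ≤ s → s ≤ t → t ≤ T →
      ∃ l, PP ω n s t = s :: l ∧ lastP s l = t ∧
        List.Pairwise (· ≤ ·) (s :: l) ∧
        (∀ y ∈ s :: l, s ≤ y ∧ y ≤ t) ∧
        List.IsChain (fun u v => ω u v ≤ ω s t / 2 ^ n) (s :: l) := by
  intro n
  induction n with
  | zero =>
    intro s t h0 hst hT
    refine ⟨[t], rfl, rfl, ?_, ?_, ?_⟩
    · simp [List.pairwise_cons, hst]
    · intro y hy
      rcases List.mem_cons.1 hy with h | h
      · subst h; exact ⟨le_rfl, hst⟩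
      · rw [List.mem_singleton] at h; subst h; exact ⟨hst, le_rfl⟩
    · simpa using hnn s t h0 hst hT
  | succ n ih =>
    intro s t h0 hst hT
    obtain ⟨hsm, hmt, hω1, hω2⟩ := midPt_spec hcont hω0 hsup hnn h0 hst hT
    set m := midPt ω s t with hm
    have h0m : 0 ≤ m := le_trans h0 hsm
    have hmT : m ≤ T := le_trans hmt hT
    obtain ⟨l₁, e₁, last₁, sort₁, mem₁, ch₁⟩ := ih h0 hsm hmT
    obtain ⟨l₂, e₂, last₂, sort₂, mem₂, ch₂⟩ := ih h0m hmt hT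
    have hPP : PP ω (n+1) s t = (s :: l₁) ++ (m :: l₂) := by
      show PP ω n s m ++ PP ω n m t = _
      rw [e₁, e₂]
    refine ⟨l₁ ++ m :: l₂, by simpa using hPP, ?_, ?_, ?_, ?_⟩
    · rw [lastP_append]; exact last₂
    · show List.Pairwise (· ≤ ·) ((s :: l₁) ++ (m :: l₂))
      rw [List.pairwise_append]
      exact ⟨sort₁, sort₂, fun a ha b hb => le_trans (mem₁ a ha).2 (mem₂ b hb).1⟩
    · intro y hy
      have hy' : y ∈ (s :: l₁) ++ (m :: l₂) := hy
      rcases List.mem_append.1 hy' with h | h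
      · exact ⟨(mem₁ y h).1, le_trans (mem₁ y h).2 hmt⟩
      · exact ⟨le_trans hsm (mem₂ y h).1, (mem₂ y h).2⟩
    · show List.IsChain (fun u v => ω u v ≤ ω s t / 2 ^ (n+1)) ((s :: l₁) ++ (m :: l₂))
      have hhalf : ω s m / 2 ^ n ≤ ω s t / 2 ^ (n+1) ∧ ω m t / 2 ^ n ≤ ω s t / 2 ^ (n+1) := by
        rw [pow_succ]
        constructor <;>
          · rw [div_le_div_iff₀ (by positivity) (by positivity)]
            nlinarith [hω1, hω2, pow_pos (two_pos (α := ℝ)) n]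
      rw [List.isChain_append]
      refine ⟨ch₁.imp (fun a b h => le_trans h hhalf.1), ch₂.imp (fun a b h => le_trans h hhalf.2), ?_⟩
      intro x hx y hy
      have hx' : x = m := by
        rw [getLast?_eq_lastP] at hx
        simp only [Option.mem_def, Option.some_inj] at hx
        rw [← hx, last₁]
      have hy' : y = m := by
        simp only [List.head?_cons, Option.mem_def, Option.some_inj] at hy
        exact hy.symm
      have hnn' := hnn s t h0 hst hT
      rw [hx', hy', hω0 m h0m hmT]
      positivity

lemma rigid {E : Type*} [NormedAddCommGroup E]
    {T θ : ℝ} {ω : ℝ → ℝ → ℝ}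
    (hcont : ContinuousOn (fun q : ℝ × ℝ => ω q.1 q.2) {q : ℝ × ℝ | 0 ≤ q.1 ∧ q.1 ≤ q.2 ∧ q.2 ≤ T})
    (hω0 : ∀ t : ℝ, 0 ≤ t → t ≤ T → ω t t = 0)
    (hsup : ∀ s u t : ℝ, 0 ≤ s → s ≤ u → u ≤ t → t ≤ T → ω s u + ω u t ≤ ω s t)
    (hnn : ∀ s t : ℝ, 0 ≤ s → s ≤ t → t ≤ T → 0 ≤ ω s t)
    (hθ : 1 < θ) (g : ℝ → ℝ → E) (L : ℝ) (hL : 0 ≤ L)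
    (hb : ∀ a b : ℝ, 0 ≤ a → a ≤ b → b ≤ T → ‖g a b‖ ≤ L * ω a b ^ θ)
    (hadd : ∀ a u b : ℝ, 0 ≤ a → a ≤ u → u ≤ b → b ≤ T → g a b = g a u + g u b) :
    ∀ a b : ℝ, 0 ≤ a → a ≤ b → b ≤ T → g a b = 0 := by
  have hθ0 : (0:ℝ) ≤ θ := by linarith
  set q : ℝ := 2 ^ ((1:ℝ) - θ) with hqdef
  have hq0 : 0 < q := Real.rpow_pos_of_pos two_pos _
  have hq1 : q < 1 := Real.rpow_lt_one_of_one_lt_of_neg one_lt_two (by linarith)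
  have key : ∀ (n : ℕ) (a b : ℝ), 0 ≤ a → a ≤ b → b ≤ T →
      ‖g a b‖ ≤ L * ω a b ^ θ * q ^ n := by
    intro n
    induction n with
    | zero => intro a b h1 h2 h3; simpa using hb a b h1 h2 h3
    | succ n ih =>
      intro a b h1 h2 h3
      obtain ⟨hsm, hmt, hω1, hω2⟩ := midPt_spec hcont hω0 hsup hnn h1 h2 h3
      set m := midPt ω a b with hm
      have h0m : 0 ≤ m := le_trans h1 hsm
      have hmT : m ≤ T := le_trans hmt h3
      have hωab := hnn a b h1 h2 h3
      have h2half : 2 * (ω a b / 2) ^ θ = ω a b ^ θ * q := by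
        rw [Real.div_rpow hωab (le_of_lt two_pos), hqdef,
          Real.rpow_sub two_pos, Real.rpow_one]
        have h2θ : (0:ℝ) < (2:ℝ) ^ θ := Real.rpow_pos_of_pos two_pos _
        field_simp
      have hA : ω a m ^ θ ≤ (ω a b / 2) ^ θ := Real.rpow_le_rpow (hnn a m h1 hsm hmT) hω1 hθ0
      have hB : ω m b ^ θ ≤ (ω a b / 2) ^ θ := Real.rpow_le_rpow (hnn m b h0m hmt h3) hω2 hθ0
      have hqn : (0:ℝ) ≤ q ^ n := le_of_lt (pow_pos hq0 n)
      rw [hadd a m b h1 hsm hmt h3]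
      calc ‖g a m + g m b‖ ≤ ‖g a m‖ + ‖g m b‖ := norm_add_le _ _
        _ ≤ L * ω a m ^ θ * q ^ n + L * ω m b ^ θ * q ^ n :=
            add_le_add (ih a m h1 hsm hmT) (ih m b h0m hmt h3)
        _ ≤ L * (ω a b / 2) ^ θ * q ^ n + L * (ω a b / 2) ^ θ * q ^ n :=
            add_le_add
              (mul_le_mul_of_nonneg_right (mul_le_mul_of_nonneg_left hA hL) hqn)
              (mul_le_mul_of_nonneg_right (mul_le_mul_of_nonneg_left hB hL) hqn)
        _ = L * ω a b ^ θ * q ^ (n+1) := by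
            rw [pow_succ]; linear_combination (L * q ^ n) * h2half
  intro a b h1 h2 h3
  have hlim0 : Tendsto (fun n : ℕ => L * ω a b ^ θ * q ^ n) atTop (𝓝 0) := by
    simpa using (tendsto_pow_atTop_nhds_zero_of_lt_one hq0.le hq1).const_mul (L * ω a b ^ θ)
  have h4 : ‖g a b‖ ≤ 0 :=
    ge_of_tendsto hlim0 (Filter.Eventually.of_forall fun n => key n a b h1 h2 h3)
  simpa using norm_le_zero_iff.1 h4


end PPsec

end Sew


set_option maxHeartbeats 2000000 in
/-- Every almost rough path is at `O(ω^θ)`-distance of a unique genuine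
rough path; almost geometric rough paths give rise to geometric rough paths. -/
theorem statement4 (T p : ℝ) (hT : 0 ≤ T) (hp1 : 1 ≤ p) (hp3 : p < 3) (d : ℕ)
    (ω : ℝ → ℝ → ℝ) (hω : IsControl T ω)
    (X : ℝ → Fin d → ℝ) (hX : HolderPath T (1 / p) ω X)
    (Xt : ℝ → ℝ → Fin d → Fin d → ℝ) (C θ : ℝ) (hC : 0 ≤ C) (hθ : 1 < θ)
    (hbound : ∀ s t : ℝ, 0 ≤ s → s ≤ t → t ≤ T → ‖Xt s t‖ ≤ C * ω s t ^ (2 / p))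
    (hchen : ∀ s u t : ℝ, 0 ≤ s → s ≤ u → u ≤ t → t ≤ T →
      ‖(fun (α β : Fin d) =>
          Xt s t α β - Xt s u α β - (X u α - X s α) * (X t β - X u β) - Xt u t α β)‖
        ≤ C * ω s t ^ θ) :
    ∃ XX : ℝ → ℝ → Fin d → Fin d → ℝ,
      IsRoughPath T p ω X XX ∧
      (∃ C' : ℝ, ∀ s t : ℝ, 0 ≤ s → s ≤ t → t ≤ T →
        ‖(fun (α β : Fin d) => XX s t α β - Xt s t α β)‖ ≤ C' * ω s t ^ θ) ∧
      (∀ XX' : ℝ → ℝ → Fin d → Fin d → ℝ,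
        IsRoughPath T p ω X XX' →
        (∃ C'' : ℝ, ∀ s t : ℝ, 0 ≤ s → s ≤ t → t ≤ T →
          ‖(fun (α β : Fin d) => XX' s t α β - Xt s t α β)‖ ≤ C'' * ω s t ^ θ) →
        ∀ s t : ℝ, 0 ≤ s → s ≤ t → t ≤ T → XX' s t = XX s t) ∧
      ((∀ s t : ℝ, 0 ≤ s → s ≤ t → t ≤ T → ∀ α β : Fin d,
          |(X t α - X s α) * (X t β - X s β) - Xt s t α β - Xt s t β α| ≤ C * ω s t ^ θ) →
        ∀ s t : ℝ, 0 ≤ s → s ≤ t → t ≤ T → ∀ α β : Fin d, bracket X XX s t α β = 0) := by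
  classical
  obtain ⟨hcont, hω0, hsup, hnn⟩ := hω
  obtain ⟨hXcont, CX₀, hCX₀⟩ := hX
  have hp0 : 0 < p := lt_of_lt_of_le one_pos hp1
  have h2p : 0 < 2/p := by positivity
  have hq2p : (2:ℝ)/p ≠ 0 := ne_of_gt h2p
  have hθ0 : (0:ℝ) ≤ θ := by linarith
  set CX : ℝ := max CX₀ 0 with hCXdef
  have hCX : 0 ≤ CX := le_max_right _ _
  have hXb : ∀ s t : ℝ, 0 ≤ s → s ≤ t → t ≤ T → ‖X t - X s‖ ≤ CX * ω s t ^ (1/p) := by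
    intro s t h1 h2 h3
    exact le_trans (hCX₀ s t h1 h2 h3)
      (mul_le_mul_of_nonneg_right (le_max_left _ _) (Real.rpow_nonneg (hnn s t h1 h2 h3) _))
  have hchen' : ∀ s u t : ℝ, 0 ≤ s → s ≤ u → u ≤ t → t ≤ T →
      ‖Xt s t - Xt s u - Sew.Mf X s u t - Xt u t‖ ≤ C * ω s t ^ θ :=
    fun s u t h1 h2 h3 h4 => hchen s u t h1 h2 h3 h4
  have hmono : ∀ s' s t t' : ℝ, 0 ≤ s' → s' ≤ s → s ≤ t → t ≤ t' → t' ≤ T →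
      ω s t ≤ ω s' t' := by
    intro s' s t t' h0 h1 h2 h3 h4
    have ha := hsup s' s t h0 h1 h2 (le_trans h3 h4)
    have hb := hsup s' t t' h0 (le_trans h1 h2) h3 h4
    have hc := hnn s' s h0 h1 (le_trans (le_trans h2 h3) h4)
    have hd := hnn t t' (le_trans h0 (le_trans h1 h2)) h3 h4
    linarith
  set q : ℝ := 2 ^ ((1:ℝ) - θ) with hqdef
  have hq0 : 0 < q := Real.rpow_pos_of_pos two_pos _
  have hq1 : q < 1 := Real.rpow_lt_one_of_one_lt_of_neg one_lt_two (by linarith)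
  have hmid : ∀ s t : ℝ, 0 ≤ s → s ≤ t → t ≤ T →
      s ≤ Sew.midPt ω s t ∧ Sew.midPt ω s t ≤ t ∧
        ω s (Sew.midPt ω s t) ≤ ω s t / 2 ∧ ω (Sew.midPt ω s t) t ≤ ω s t / 2 :=
    fun s t h1 h2 h3 => Sew.midPt_spec hcont hω0 hsup hnn h1 h2 h3
  have hXtd : ∀ a : ℝ, 0 ≤ a → a ≤ T → Xt a a = 0 :=
    fun a h1 h2 => Sew.Xt_diag hC hω0 hq2p hbound h1 h2
  set aseq : ℝ → ℝ → ℕ → (Fin d → Fin d → ℝ) :=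
    fun s t n => Sew.SS X Xt s (Sew.PP ω n s t) with haseq
  have hstep0 : ∀ s t : ℝ, aseq s t 0 = Xt s t := by
    intro s t
    show Sew.SS X Xt s [s, t] = Xt s t
    rw [Sew.SS_cons, Sew.SS_single]
    have h : Sew.Mf X s s t = 0 := by funext α β; simp [Sew.Mf]
    rw [h]; simp
  have hrec : ∀ (n : ℕ) (s t : ℝ), 0 ≤ s → s ≤ t → t ≤ T →
      aseq s t (n+1) = aseq s (Sew.midPt ω s t) n + Sew.Mf X s (Sew.midPt ω s t) t
        + aseq (Sew.midPt ω s t) t n := by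
    intro n s t h0 hst hT'
    obtain ⟨hsm, hmt, _, _⟩ := hmid s t h0 hst hT'
    set m := Sew.midPt ω s t with hm
    obtain ⟨l₁, e₁, last₁, _, _, _⟩ :=
      Sew.PP_spec hcont hω0 hsup hnn n h0 hsm (le_trans hmt hT')
    obtain ⟨l₂, e₂, last₂, _, _, _⟩ :=
      Sew.PP_spec hcont hω0 hsup hnn n (le_trans h0 hsm) hmt hT'
    simp only [haseq]
    rw [show Sew.PP ω (n+1) s t = Sew.PP ω n s m ++ Sew.PP ω n m t from rfl, e₁, e₂]
    exact Sew.SS_glue s m t l₁ l₂ last₁ last₂ (hXtd m (le_trans h0 hsm) (le_trans hmt hT'))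
  have claimA : ∀ (n : ℕ) (s t : ℝ), 0 ≤ s → s ≤ t → t ≤ T →
      ‖aseq s t (n+1) - aseq s t n‖ ≤ C * ω s t ^ θ * q ^ n := by
    intro n
    induction n with
    | zero =>
      intro s t h0 hst hT'
      obtain ⟨hsm, hmt, _, _⟩ := hmid s t h0 hst hT'
      rw [hrec 0 s t h0 hst hT', hstep0, hstep0, hstep0]
      have h : Xt s (Sew.midPt ω s t) + Sew.Mf X s (Sew.midPt ω s t) t
            + Xt (Sew.midPt ω s t) t - Xt s t
          = -(Xt s t - Xt s (Sew.midPt ω s t) - Sew.Mf X s (Sew.midPt ω s t) t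
            - Xt (Sew.midPt ω s t) t) := by abel
      rw [h, norm_neg]
      simpa using hchen' s (Sew.midPt ω s t) t h0 hsm hmt hT'
    | succ n ih =>
      intro s t h0 hst hT'
      obtain ⟨hsm, hmt, hω1, hω2⟩ := hmid s t h0 hst hT'
      set m := Sew.midPt ω s t with hm
      have h0m : 0 ≤ m := le_trans h0 hsm
      have hmT : m ≤ T := le_trans hmt hT'
      have hωst := hnn s t h0 hst hT'
      have e : aseq s t (n+2) - aseq s t (n+1)
          = (aseq s m (n+1) - aseq s m n) + (aseq m t (n+1) - aseq m t n) := by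
        rw [hrec (n+1) s t h0 hst hT', hrec n s t h0 hst hT']; abel
      rw [e]
      have h1 := ih s m h0 hsm hmT
      have h2 := ih m t h0m hmt hT'
      have h2half : 2 * (ω s t / 2) ^ θ = ω s t ^ θ * q := by
        rw [Real.div_rpow hωst (le_of_lt two_pos), hqdef,
          Real.rpow_sub two_pos, Real.rpow_one]
        have h2θ : (0:ℝ) < (2:ℝ) ^ θ := Real.rpow_pos_of_pos two_pos _
        field_simp
      have hA : ω s m ^ θ ≤ (ω s t / 2) ^ θ :=
        Real.rpow_le_rpow (hnn s m h0 hsm hmT) hω1 hθ0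
      have hB : ω m t ^ θ ≤ (ω s t / 2) ^ θ :=
        Real.rpow_le_rpow (hnn m t h0m hmt hT') hω2 hθ0
      have hqn : (0:ℝ) ≤ q ^ n := le_of_lt (pow_pos hq0 n)
      calc ‖(aseq s m (n+1) - aseq s m n) + (aseq m t (n+1) - aseq m t n)‖
          ≤ ‖aseq s m (n+1) - aseq s m n‖ + ‖aseq m t (n+1) - aseq m t n‖ := norm_add_le _ _
        _ ≤ C * ω s m ^ θ * q ^ n + C * ω m t ^ θ * q ^ n := add_le_add h1 h2
        _ ≤ C * (ω s t / 2) ^ θ * q ^ n + C * (ω s t / 2) ^ θ * q ^ n :=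
            add_le_add
              (mul_le_mul_of_nonneg_right (mul_le_mul_of_nonneg_left hA hC) hqn)
              (mul_le_mul_of_nonneg_right (mul_le_mul_of_nonneg_left hB hC) hqn)
        _ = C * ω s t ^ θ * q ^ (n+1) := by
            rw [pow_succ]; linear_combination (C * q ^ n) * h2half
  have hcauchy : ∀ s t : ℝ, 0 ≤ s → s ≤ t → t ≤ T → CauchySeq (aseq s t) := by
    intro s t h0 hst hT'
    refine cauchySeq_of_le_geometric q (C * ω s t ^ θ) hq1 (fun n => ?_)
    rw [dist_eq_norm, norm_sub_rev]
    exact claimA n s t h0 hst hT'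
  obtain ⟨XXf, hlim⟩ : ∃ XXf : ℝ → ℝ → (Fin d → Fin d → ℝ),
      ∀ s t : ℝ, 0 ≤ s → s ≤ t → t ≤ T → Tendsto (aseq s t) atTop (𝓝 (XXf s t)) :=
    ⟨fun s t => limUnder atTop (aseq s t),
      fun s t h0 hst hT' => (hcauchy s t h0 hst hT').tendsto_limUnder⟩
  set K : ℝ := C * (1 - q)⁻¹ with hK
  have hK0 : 0 ≤ K := mul_nonneg hC (by rw [inv_nonneg]; linarith)
  have hpartial : ∀ (s t : ℝ), 0 ≤ s → s ≤ t → t ≤ T → ∀ n : ℕ,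
      ‖aseq s t n - Xt s t‖ ≤ C * ω s t ^ θ * ∑ k ∈ Finset.range n, q ^ k := by
    intro s t h0 hst hT' n
    induction n with
    | zero => simp [hstep0]
    | succ n ih =>
      have htri := dist_triangle (aseq s t (n+1)) (aseq s t n) (Xt s t)
      rw [dist_eq_norm, dist_eq_norm, dist_eq_norm] at htri
      have hca := claimA n s t h0 hst hT'
      rw [Finset.sum_range_succ, mul_add]
      linarith
  have hgeom : ∀ n : ℕ, (∑ k ∈ Finset.range n, q ^ k) ≤ (1 - q)⁻¹ := by
    intro n
    have hs := Summable.sum_le_tsum (Finset.range n) (fun i _ => le_of_lt (pow_pos hq0 i))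
      (summable_geometric_of_lt_one hq0.le hq1)
    rwa [tsum_geometric_of_lt_one hq0.le hq1] at hs
  have hclose : ∀ s t : ℝ, 0 ≤ s → s ≤ t → t ≤ T → ‖XXf s t - Xt s t‖ ≤ K * ω s t ^ θ := by
    intro s t h0 hst hT'
    have hωst := hnn s t h0 hst hT'
    have hl : Tendsto (fun n => ‖aseq s t n - Xt s t‖) atTop (𝓝 ‖XXf s t - Xt s t‖) :=
      ((hlim s t h0 hst hT').sub tendsto_const_nhds).norm
    refine le_of_tendsto hl (Filter.Eventually.of_forall fun n => ?_)
    calc ‖aseq s t n - Xt s t‖ ≤ C * ω s t ^ θ * ∑ k ∈ Finset.range n, q ^ k :=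
        hpartial s t h0 hst hT' n
      _ ≤ C * ω s t ^ θ * (1-q)⁻¹ :=
        mul_le_mul_of_nonneg_left (hgeom n)
          (mul_nonneg hC (Real.rpow_nonneg hωst _))
      _ = K * ω s t ^ θ := by rw [hK]; ring
  -- Chen's identity for the limit
  have hchenXX : ∀ s u t : ℝ, 0 ≤ s → s ≤ u → u ≤ t → t ≤ T →
      XXf s t = XXf s u + Sew.Mf X s u t + XXf u t := by
    intro s u t h0 hsu hut hT'
    have hst : s ≤ t := le_trans hsu hut
    have h0u : 0 ≤ u := le_trans h0 hsu
    have huT : u ≤ T := le_trans hut hT'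
    have hωst := hnn s t h0 hst hT'
    have hdiff : ∀ n : ℕ, ‖aseq s t n - (aseq s u n + Sew.Mf X s u t + aseq u t n)‖
        ≤ C * (3 * 2 ^ (n+1)) * (ω s t / 2 ^ n) ^ θ := by
      intro n
      have hεnn : (0:ℝ) ≤ ω s t / 2 ^ n := by positivity
      obtain ⟨lL, eL, lastL, sortL, memL, chL⟩ := Sew.PP_spec hcont hω0 hsup hnn n h0 hst hT'
      obtain ⟨l₁, e₁, last₁, sort₁, mem₁, ch₁⟩ := Sew.PP_spec hcont hω0 hsup hnn n h0 hsu huT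
      obtain ⟨l₂, e₂, last₂, sort₂, mem₂, ch₂⟩ := Sew.PP_spec hcont hω0 hsup hnn n h0u hut hT'
      set Q : List ℝ := (s :: l₁) ++ (u :: l₂) with hQ
      have hQcons : Q = s :: (l₁ ++ u :: l₂) := rfl
      have lastQ : Sew.lastP s (l₁ ++ u :: l₂) = t := by rw [Sew.lastP_append]; exact last₂
      have sortQ : List.Pairwise (· ≤ ·) Q := by
        rw [hQ, List.pairwise_append]
        exact ⟨sort₁, sort₂, fun a ha b hb => le_trans (mem₁ a ha).2 (mem₂ b hb).1⟩
      have memQt : ∀ y ∈ Q, s ≤ y ∧ y ≤ t := by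
        intro y hy
        rcases List.mem_append.1 hy with h | h
        · exact ⟨(mem₁ y h).1, le_trans (mem₁ y h).2 hut⟩
        · exact ⟨le_trans hsu (mem₂ y h).1, (mem₂ y h).2⟩
      have memQ : ∀ y ∈ Q, 0 ≤ y ∧ y ≤ T :=
        fun y hy => ⟨le_trans h0 (memQt y hy).1, le_trans (memQt y hy).2 hT'⟩
      have h2n : (0:ℝ) < 2 ^ n := by positivity
      have chQ : List.IsChain (fun a b => ω a b ≤ ω s t / 2 ^ n) Q := by
        rw [hQ, List.isChain_append]
        refine ⟨ch₁.imp (fun a b h => le_trans h ?_), ch₂.imp (fun a b h => le_trans h ?_), ?_⟩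
        · have h' := hmono s s u t h0 le_rfl hsu hut hT'
          gcongr
        · have h' := hmono s u t t h0 hsu hut le_rfl hT'
          gcongr
        · intro x hx y hy
          have hx' : x = u := by
            rw [Sew.getLast?_eq_lastP] at hx
            simp only [Option.mem_def, Option.some_inj] at hx
            rw [← hx, last₁]
          have hy' : y = u := by
            simp only [List.head?_cons, Option.mem_def, Option.some_inj] at hy
            exact hy.symm
          rw [hx', hy', hω0 u h0u huT]
          positivity
      have memLT : ∀ y ∈ s :: lL, 0 ≤ y ∧ y ≤ T :=
        fun y hy => ⟨le_trans h0 (memL y hy).1, le_trans (memL y hy).2 hT'⟩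
      -- fold Q into L
      obtain ⟨lR, heqR, lastR, sortR, memR, chR, normR⟩ :=
        Sew.fold_est hC hω0 hsup hnn hθ0 hq2p hbound hchen' (ω s t / 2 ^ n) hεnn s
          Q lL s sortL memLT chL
          (fun x hx => ⟨(memQt x hx).1, by rw [lastL]; exact (memQt x hx).2⟩)
      -- fold L into Q
      obtain ⟨lR', heqR', lastR', sortR', memR', chR', normR'⟩ :=
        Sew.fold_est hC hω0 hsup hnn hθ0 hq2p hbound hchen' (ω s t / 2 ^ n) hεnn s
          (s :: lL) (l₁ ++ u :: l₂) s (by rw [← hQcons]; exact sortQ)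
          (by rw [← hQcons]; exact memQ) (by rw [← hQcons]; exact chQ)
          (fun x hx => ⟨(memL x hx).1, by rw [lastQ]; exact (memL x hx).2⟩)
      have hRR' : (s :: lR : List ℝ) = s :: lR' := by
        rw [← heqR, ← heqR']
        refine List.Perm.eq_of_pairwise' (r := fun x1 x2 : ℝ => x1 ≤ x2)
          (by rw [heqR]; exact sortR) (by rw [heqR']; exact sortR')
          ((Sew.foldr_perm Q (s :: lL)).trans
            (List.perm_append_comm.trans (Sew.foldr_perm (s :: lL) Q).symm))
      have hglue : Sew.SS X Xt s Q = aseq s u n + Sew.Mf X s u t + aseq u t n := by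
        rw [hQ, Sew.SS_glue s u t l₁ l₂ last₁ last₂ (hXtd u h0u huT)]
        simp only [haseq]
        rw [e₁, e₂]
      have e5 : aseq s t n - (aseq s u n + Sew.Mf X s u t + aseq u t n)
          = (Sew.SS X Xt s (s :: lR') - Sew.SS X Xt s Q)
            - (Sew.SS X Xt s (s :: lR) - Sew.SS X Xt s (s :: lL)) := by
        rw [hRR', ← hglue]
        have : aseq s t n = Sew.SS X Xt s (s :: lL) := by
          simp only [haseq]; rw [eL]
        rw [this, hQcons]
        abel
      have hQc2 : Sew.SS X Xt s Q = Sew.SS X Xt s (s :: (l₁ ++ u :: l₂)) := by rw [hQcons]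
      rw [hQc2] at e5
      rw [e5]
      have htot := norm_sub_le (Sew.SS X Xt s (s :: lR') - Sew.SS X Xt s (s :: (l₁ ++ u :: l₂)))
        (Sew.SS X Xt s (s :: lR) - Sew.SS X Xt s (s :: lL))
      have hlenL : ((s :: lL).length : ℝ) = 2 ^ (n+1) := by
        rw [← eL, Sew.PP_length]; push_cast; ring
      have hlenQ : (Q.length : ℝ) = 2 ^ (n+1) + 2 ^ (n+1) := by
        rw [hQ, List.length_append, ← e₁, ← e₂, Sew.PP_length, Sew.PP_length]
        push_cast; ring
      rw [hlenQ] at normR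
      rw [hlenL] at normR'
      have hεθ : (0:ℝ) ≤ (ω s t / 2 ^ n) ^ θ := Real.rpow_nonneg hεnn _
      nlinarith [htot, normR, normR']
    have hb2 : ∀ n : ℕ, C * (3 * 2 ^ (n+1)) * (ω s t / 2 ^ n) ^ θ
        = (6 * C * ω s t ^ θ) * q ^ n := by
      intro n
      have e1 : ((2:ℝ) ^ n) = (2:ℝ) ^ (n:ℝ) := (Real.rpow_natCast 2 n).symm
      have e2 : ((2:ℝ) ^ n : ℝ) ^ θ = (2:ℝ) ^ ((n:ℝ) * θ) := by
        rw [e1, ← Real.rpow_mul (le_of_lt two_pos)]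
      have e3 : q ^ n = (2:ℝ) ^ (((1:ℝ) - θ) * (n:ℝ)) := by
        rw [← Real.rpow_natCast q n, hqdef, ← Real.rpow_mul (le_of_lt two_pos)]
      have e4 : (2:ℝ) ^ (((1:ℝ) - θ) * (n:ℝ)) = (2:ℝ) ^ (n:ℝ) / (2:ℝ) ^ ((n:ℝ) * θ) := by
        rw [show ((1:ℝ) - θ) * (n:ℝ) = (n:ℝ) - (n:ℝ) * θ by ring, Real.rpow_sub two_pos]
      have h2θ : (0:ℝ) < (2:ℝ) ^ ((n:ℝ) * θ) := Real.rpow_pos_of_pos two_pos _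
      have h2r : (0:ℝ) < (2:ℝ) ^ (n:ℝ) := Real.rpow_pos_of_pos two_pos _
      rw [Real.div_rpow hωst (by positivity), e2, e3, e4, pow_succ, e1]
      field_simp
      ring
    have hdlim : Tendsto (fun n => aseq s t n - (aseq s u n + Sew.Mf X s u t + aseq u t n))
        atTop (𝓝 0) := by
      refine squeeze_zero_norm (fun n => le_of_le_of_eq (hdiff n) (hb2 n)) ?_
      simpa using (tendsto_pow_atTop_nhds_zero_of_lt_one hq0.le hq1).const_mul
        (6 * C * ω s t ^ θ)
    have hBlim : Tendsto (fun n => aseq s u n + Sew.Mf X s u t + aseq u t n) atTop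
        (𝓝 (XXf s u + Sew.Mf X s u t + XXf u t)) :=
      ((hlim s u h0 hsu huT).add tendsto_const_nhds).add (hlim u t h0u hut hT')
    refine tendsto_nhds_unique (hlim s t h0 hst hT') ?_
    have h6 := hdlim.add hBlim
    simpa using h6
  -- squared rpow helper and Mf bound
  have hsq : ∀ x : ℝ, 0 ≤ x → x ^ ((1:ℝ)/p) * x ^ ((1:ℝ)/p) = x ^ ((2:ℝ)/p) := by
    intro x hx
    have hne : (1:ℝ)/p + 1/p ≠ 0 := by positivity
    rw [← Real.rpow_add' hx hne, show (1:ℝ)/p + 1/p = 2/p by ring]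
  have hMfb : ∀ a u b : ℝ, 0 ≤ a → a ≤ u → u ≤ b → b ≤ T →
      ‖Sew.Mf X a u b‖ ≤ CX^2 * (ω a u ^ ((1:ℝ)/p) * ω u b ^ ((1:ℝ)/p)) := by
    intro a u b h1 h2 h3 h4
    have hnn1 := hnn a u h1 h2 (le_trans h3 h4)
    have hnn2 := hnn u b (le_trans h1 h2) h3 h4
    have hrhs : (0:ℝ) ≤ CX^2 * (ω a u ^ ((1:ℝ)/p) * ω u b ^ ((1:ℝ)/p)) := by positivity
    rw [pi_norm_le_iff_of_nonneg hrhs]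
    intro α
    rw [pi_norm_le_iff_of_nonneg hrhs]
    intro β
    have h5 : |X u α - X a α| ≤ CX * ω a u ^ ((1:ℝ)/p) := by
      have h6 := norm_le_pi_norm (X u - X a) α
      simpa [Real.norm_eq_abs] using le_trans h6 (hXb a u h1 h2 (le_trans h3 h4))
    have h7 : |X b β - X u β| ≤ CX * ω u b ^ ((1:ℝ)/p) := by
      have h6 := norm_le_pi_norm (X b - X u) β
      simpa [Real.norm_eq_abs] using le_trans h6 (hXb u b (le_trans h1 h2) h3 h4)
    show ‖(X u α - X a α) * (X b β - X u β)‖ ≤ _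
    rw [Real.norm_eq_abs, abs_mul]
    calc |X u α - X a α| * |X b β - X u β|
        ≤ (CX * ω a u ^ ((1:ℝ)/p)) * (CX * ω u b ^ ((1:ℝ)/p)) :=
          mul_le_mul h5 h7 (abs_nonneg _) (by positivity)
      _ = CX^2 * (ω a u ^ ((1:ℝ)/p) * ω u b ^ ((1:ℝ)/p)) := by ring
  have hhalfθ : ∀ x : ℝ, 0 ≤ x → 2 * (x/2) ^ θ = x ^ θ * q := by
    intro x hx
    rw [Real.div_rpow hx (le_of_lt two_pos), hqdef, Real.rpow_sub two_pos, Real.rpow_one]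
    have h2θ : (0:ℝ) < (2:ℝ) ^ θ := Real.rpow_pos_of_pos two_pos _
    field_simp
  -- the ω^(2/p) bound
  have hbdXX : ∃ C₂ : ℝ, 0 ≤ C₂ ∧ ∀ s t : ℝ, 0 ≤ s → s ≤ t → t ≤ T →
      ‖XXf s t‖ ≤ C₂ * ω s t ^ ((2:ℝ)/p) := by
    have hbase : ∀ a b : ℝ, 0 ≤ a → a ≤ b → b ≤ T →
        ‖XXf a b‖ ≤ C * ω a b ^ ((2:ℝ)/p) + K * ω a b ^ θ := by
      intro a b h1 h2 h3
      have h4 := hclose a b h1 h2 h3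
      have h5 := hbound a b h1 h2 h3
      have h6 : ‖XXf a b‖ ≤ ‖XXf a b - Xt a b‖ + ‖Xt a b‖ := by
        have h7 := norm_add_le (XXf a b - Xt a b) (Xt a b)
        rwa [sub_add_cancel] at h7
      linarith
    rcases le_or_gt ((2:ℝ)/p) θ with hcase | hcase
    · have hΩ0 : 0 ≤ ω 0 T := hnn 0 T le_rfl hT le_rfl
      refine ⟨C + K * (ω 0 T) ^ (θ - 2/p),
        add_nonneg hC (mul_nonneg hK0 (Real.rpow_nonneg hΩ0 _)), ?_⟩
      intro a b h1 h2 h3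
      have hωab := hnn a b h1 h2 h3
      have hΩ : ω a b ≤ ω 0 T := hmono 0 a b T le_rfl h1 h2 h3 le_rfl
      have h4 : ω a b ^ θ ≤ (ω 0 T) ^ (θ - 2/p) * ω a b ^ ((2:ℝ)/p) := by
        have e1 : ω a b ^ θ = ω a b ^ (θ - 2/p) * ω a b ^ ((2:ℝ)/p) := by
          rw [← Real.rpow_add' hωab
            (by rw [show θ - 2/p + 2/p = θ by ring]; exact ne_of_gt (by linarith))]
          congr 1; ring
        rw [e1]
        exact mul_le_mul_of_nonneg_right
          (Real.rpow_le_rpow hωab hΩ (by linarith)) (Real.rpow_nonneg hωab _)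
      have h5 := hbase a b h1 h2 h3
      calc ‖XXf a b‖ ≤ C * ω a b ^ ((2:ℝ)/p) + K * ω a b ^ θ := h5
        _ ≤ C * ω a b ^ ((2:ℝ)/p) + K * ((ω 0 T) ^ (θ - 2/p) * ω a b ^ ((2:ℝ)/p)) :=
            add_le_add_right (mul_le_mul_of_nonneg_left h4 hK0) _
        _ = (C + K * (ω 0 T) ^ (θ - 2/p)) * ω a b ^ ((2:ℝ)/p) := by ring
    · have h2p1 : (1:ℝ) < 2/p := lt_trans hθ hcase
      set q₂ : ℝ := 2 ^ ((1:ℝ) - 2/p) with hq₂def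
      have hq₂0 : 0 < q₂ := Real.rpow_pos_of_pos two_pos _
      have hq₂1 : q₂ < 1 := Real.rpow_lt_one_of_one_lt_of_neg one_lt_two (by linarith)
      set c₀ : ℝ := CX^2 * (2:ℝ) ^ (-((2:ℝ)/p)) with hc₀
      have hc₀0 : 0 ≤ c₀ := by positivity
      set D : ℝ := max C (c₀ / (1 - q₂)) with hD
      have hD0 : 0 ≤ D := le_trans hC (le_max_left _ _)
      have hDrec : D * q₂ + c₀ ≤ D := by
        have h2 : c₀ / (1-q₂) ≤ D := le_max_right _ _
        have h3 : (0:ℝ) < 1 - q₂ := by linarith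
        rw [div_le_iff₀ h3] at h2
        nlinarith
      have hhalf2 : ∀ x : ℝ, 0 ≤ x → 2 * (x/2) ^ ((2:ℝ)/p) = x ^ ((2:ℝ)/p) * q₂ := by
        intro x hx
        rw [Real.div_rpow hx (le_of_lt two_pos), hq₂def, Real.rpow_sub two_pos, Real.rpow_one]
        have h2θ : (0:ℝ) < (2:ℝ) ^ ((2:ℝ)/p) := Real.rpow_pos_of_pos two_pos _
        field_simp
      have claimB : ∀ (n : ℕ) (a b : ℝ), 0 ≤ a → a ≤ b → b ≤ T →
          ‖XXf a b‖ ≤ D * ω a b ^ ((2:ℝ)/p) + K * ω a b ^ θ * q ^ n := by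
        intro n
        induction n with
        | zero =>
          intro a b h1 h2 h3
          have h4 := hbase a b h1 h2 h3
          have h5 : C * ω a b ^ ((2:ℝ)/p) ≤ D * ω a b ^ ((2:ℝ)/p) :=
            mul_le_mul_of_nonneg_right (le_max_left _ _)
              (Real.rpow_nonneg (hnn a b h1 h2 h3) _)
          simp only [pow_zero, mul_one]
          linarith
        | succ n ih =>
          intro a b h1 h2 h3
          obtain ⟨hsm, hmt, hω1, hω2⟩ := hmid a b h1 h2 h3
          set m := Sew.midPt ω a b with hm
          have h0m : 0 ≤ m := le_trans h1 hsm
          have hmT : m ≤ T := le_trans hmt h3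
          have hωab := hnn a b h1 h2 h3
          have e1 : ‖XXf a b‖ ≤ ‖XXf a m‖ + ‖Sew.Mf X a m b‖ + ‖XXf m b‖ := by
            rw [hchenXX a m b h1 hsm hmt h3]
            exact le_trans (norm_add_le _ _) (add_le_add_left (norm_add_le _ _) _)
          have hMf2 : ‖Sew.Mf X a m b‖ ≤ c₀ * ω a b ^ ((2:ℝ)/p) := by
            have hx1 : ω a m ^ ((1:ℝ)/p) ≤ (ω a b / 2) ^ ((1:ℝ)/p) :=
              Real.rpow_le_rpow (hnn a m h1 hsm hmT) hω1 (by positivity)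
            have hx2 : ω m b ^ ((1:ℝ)/p) ≤ (ω a b / 2) ^ ((1:ℝ)/p) :=
              Real.rpow_le_rpow (hnn m b h0m hmt h3) hω2 (by positivity)
            have hx3 : ω a m ^ ((1:ℝ)/p) * ω m b ^ ((1:ℝ)/p)
                ≤ (ω a b/2) ^ ((1:ℝ)/p) * (ω a b/2) ^ ((1:ℝ)/p) :=
              mul_le_mul hx1 hx2 (Real.rpow_nonneg (hnn m b h0m hmt h3) _)
                (Real.rpow_nonneg (by positivity) _)
            rw [hsq (ω a b / 2) (by positivity)] at hx3
            have hx4 : (ω a b / 2) ^ ((2:ℝ)/p) = ω a b ^ ((2:ℝ)/p) * (2:ℝ)^(-((2:ℝ)/p)) := by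
              rw [Real.div_rpow hωab (le_of_lt two_pos), Real.rpow_neg (le_of_lt two_pos),
                div_eq_mul_inv]
            rw [hx4] at hx3
            calc ‖Sew.Mf X a m b‖ ≤ CX^2 * (ω a m ^ ((1:ℝ)/p) * ω m b ^ ((1:ℝ)/p)) :=
                hMfb a m b h1 hsm hmt h3
              _ ≤ CX^2 * (ω a b ^ ((2:ℝ)/p) * 2 ^ (-((2:ℝ)/p))) :=
                mul_le_mul_of_nonneg_left hx3 (by positivity)
              _ = c₀ * ω a b ^ ((2:ℝ)/p) := by rw [hc₀]; ring
          have i1 := ih a m h1 hsm hmT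
          have i2 := ih m b h0m hmt h3
          have hA2 : ω a m ^ ((2:ℝ)/p) ≤ (ω a b / 2) ^ ((2:ℝ)/p) :=
            Real.rpow_le_rpow (hnn a m h1 hsm hmT) hω1 (by positivity)
          have hB2 : ω m b ^ ((2:ℝ)/p) ≤ (ω a b / 2) ^ ((2:ℝ)/p) :=
            Real.rpow_le_rpow (hnn m b h0m hmt h3) hω2 (by positivity)
          have hAθ : ω a m ^ θ ≤ (ω a b / 2) ^ θ :=
            Real.rpow_le_rpow (hnn a m h1 hsm hmT) hω1 hθ0
          have hBθ : ω m b ^ θ ≤ (ω a b / 2) ^ θ :=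
            Real.rpow_le_rpow (hnn m b h0m hmt h3) hω2 hθ0
          have hqn : (0:ℝ) ≤ q ^ n := le_of_lt (pow_pos hq0 n)
          have e2 := hhalf2 (ω a b) hωab
          have e3 := hhalfθ (ω a b) hωab
          have hω2p : (0:ℝ) ≤ ω a b ^ ((2:ℝ)/p) := Real.rpow_nonneg hωab _
          have p1 : D * ω a m ^ ((2:ℝ)/p) ≤ D * (ω a b / 2) ^ ((2:ℝ)/p) :=
            mul_le_mul_of_nonneg_left hA2 hD0
          have p2 : D * ω m b ^ ((2:ℝ)/p) ≤ D * (ω a b / 2) ^ ((2:ℝ)/p) :=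
            mul_le_mul_of_nonneg_left hB2 hD0
          have p3 : K * ω a m ^ θ * q ^ n ≤ K * (ω a b / 2) ^ θ * q ^ n :=
            mul_le_mul_of_nonneg_right (mul_le_mul_of_nonneg_left hAθ hK0) hqn
          have p4 : K * ω m b ^ θ * q ^ n ≤ K * (ω a b / 2) ^ θ * q ^ n :=
            mul_le_mul_of_nonneg_right (mul_le_mul_of_nonneg_left hBθ hK0) hqn
          have p5 : (D * q₂ + c₀) * ω a b ^ ((2:ℝ)/p) ≤ D * ω a b ^ ((2:ℝ)/p) :=
            mul_le_mul_of_nonneg_right hDrec hω2p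
          rw [pow_succ]
          calc ‖XXf a b‖
              ≤ (D * (ω a b/2) ^ ((2:ℝ)/p) + K * (ω a b/2) ^ θ * q ^ n)
                + c₀ * ω a b ^ ((2:ℝ)/p)
                + (D * (ω a b/2) ^ ((2:ℝ)/p) + K * (ω a b/2) ^ θ * q ^ n) :=
              le_trans e1 (add_le_add (add_le_add
                (le_trans i1 (add_le_add p1 p3)) hMf2)
                (le_trans i2 (add_le_add p2 p4)))
            _ = (D * q₂ + c₀) * ω a b ^ ((2:ℝ)/p) + K * ω a b ^ θ * (q ^ n * q) := by
                linear_combination D * e2 + (K * q ^ n) * e3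
            _ ≤ D * ω a b ^ ((2:ℝ)/p) + K * ω a b ^ θ * (q ^ n * q) :=
              add_le_add_left p5 _
      refine ⟨D, hD0, ?_⟩
      intro a b h1 h2 h3
      have hlim2 : Tendsto (fun n : ℕ => D * ω a b ^ ((2:ℝ)/p) + K * ω a b ^ θ * q ^ n)
          atTop (𝓝 (D * ω a b ^ ((2:ℝ)/p))) := by
        have h4 := (tendsto_pow_atTop_nhds_zero_of_lt_one hq0.le hq1).const_mul
          (K * ω a b ^ θ)
        simpa using tendsto_const_nhds.add h4
      exact ge_of_tendsto hlim2
        (Filter.Eventually.of_forall fun n => claimB n a b h1 h2 h3)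
  obtain ⟨C₂, hC₂0, hC₂⟩ := hbdXX
  -- continuity of XXf on the simplex
  have hcontXX : ContinuousOn (fun qp : ℝ × ℝ => XXf qp.1 qp.2)
      {qp : ℝ × ℝ | 0 ≤ qp.1 ∧ qp.1 ≤ qp.2 ∧ qp.2 ≤ T} := by
    set Δ : Set (ℝ × ℝ) := {qp : ℝ × ℝ | 0 ≤ qp.1 ∧ qp.1 ≤ qp.2 ∧ qp.2 ≤ T} with hΔ
    have hΩ0 : 0 ≤ ω 0 T := hnn 0 T le_rfl hT le_rfl
    set A : ℝ := (CX^2 + C₂) * (ω 0 T) ^ ((1:ℝ)/p) with hA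
    have hA0 : 0 ≤ A := mul_nonneg (by positivity) (Real.rpow_nonneg hΩ0 _)
    have hm1T : ∀ a : ℝ, 0 ≤ a → a ≤ T → ω 0 a ^ ((1:ℝ)/p) ≤ ω 0 T ^ ((1:ℝ)/p) :=
      fun a h1 h2 => Real.rpow_le_rpow (hnn 0 a le_rfl h1 h2)
        (hmono 0 0 a T le_rfl le_rfl h1 h2 le_rfl) (by positivity)
    have hF : ∀ a b : ℝ, 0 ≤ a → a ≤ b → b ≤ T →
        ‖XXf 0 b - XXf 0 a‖ ≤ A * ω a b ^ ((1:ℝ)/p) := by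
      intro a b h1 h2 h3
      have hωab := hnn a b h1 h2 h3
      have e1 : XXf 0 b - XXf 0 a = Sew.Mf X 0 a b + XXf a b := by
        rw [hchenXX 0 a b le_rfl h1 h2 h3]; abel
      have h4 := hMfb 0 a b le_rfl h1 h2 h3
      have h5 := hC₂ a b h1 h2 h3
      have hm2 : ω a b ^ ((2:ℝ)/p) ≤ ω 0 T ^ ((1:ℝ)/p) * ω a b ^ ((1:ℝ)/p) := by
        rw [← hsq (ω a b) hωab]
        exact mul_le_mul_of_nonneg_right
          (Real.rpow_le_rpow hωab (hmono 0 a b T le_rfl h1 h2 h3 le_rfl) (by positivity))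
          (Real.rpow_nonneg hωab _)
      have h6 : ‖Sew.Mf X 0 a b‖ ≤ CX^2 * (ω 0 T ^ ((1:ℝ)/p) * ω a b ^ ((1:ℝ)/p)) := by
        refine le_trans h4 (mul_le_mul_of_nonneg_left ?_ (by positivity))
        exact mul_le_mul_of_nonneg_right (hm1T a h1 (le_trans h2 h3))
          (Real.rpow_nonneg hωab _)
      calc ‖XXf 0 b - XXf 0 a‖ ≤ ‖Sew.Mf X 0 a b‖ + ‖XXf a b‖ := by
            rw [e1]; exact norm_add_le _ _
        _ ≤ CX^2 * (ω 0 T ^ ((1:ℝ)/p) * ω a b ^ ((1:ℝ)/p)) + C₂ * ω a b ^ ((2:ℝ)/p) :=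
            add_le_add h6 h5
        _ ≤ CX^2 * (ω 0 T ^ ((1:ℝ)/p) * ω a b ^ ((1:ℝ)/p))
            + C₂ * (ω 0 T ^ ((1:ℝ)/p) * ω a b ^ ((1:ℝ)/p)) :=
            add_le_add_right (mul_le_mul_of_nonneg_left hm2 hC₂0) _
        _ = A * ω a b ^ ((1:ℝ)/p) := by rw [hA]; ring
    have hΔc : IsCompact Δ := by
      have hclosed : IsClosed Δ := by
        have h1 : IsClosed {qp : ℝ×ℝ | 0 ≤ qp.1} := isClosed_le continuous_const continuous_fst
        have h2 : IsClosed {qp : ℝ×ℝ | qp.1 ≤ qp.2} := isClosed_le continuous_fst continuous_snd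
        have h3 : IsClosed {qp : ℝ×ℝ | qp.2 ≤ T} := isClosed_le continuous_snd continuous_const
        have e : Δ = {qp : ℝ×ℝ | 0 ≤ qp.1} ∩ ({qp : ℝ×ℝ | qp.1 ≤ qp.2} ∩ {qp : ℝ×ℝ | qp.2 ≤ T}) := by
          ext qp; simp [hΔ, Set.mem_setOf_eq, and_assoc]
        rw [e]; exact h1.inter (h2.inter h3)
      refine IsCompact.of_isClosed_subset (isCompact_Icc (a := ((0:ℝ),(0:ℝ))) (b := (T,T)))
        hclosed ?_
      intro qp hqp
      rw [Set.mem_Icc]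
      exact ⟨⟨hqp.1, le_trans hqp.1 hqp.2.1⟩, ⟨le_trans hqp.2.1 hqp.2.2, hqp.2.2⟩⟩
    have huc := hΔc.uniformContinuousOn_of_continuous hcont
    rw [Metric.uniformContinuousOn_iff] at huc
    have hFcont : ContinuousOn (fun t => XXf 0 t) (Icc 0 T) := by
      rw [Metric.continuousOn_iff]
      intro b hb ε hε
      have hA1 : (0:ℝ) < A + 1 := by linarith
      set ε' : ℝ := (ε / (A+1)) ^ p with hε'def
      have hε'0 : 0 < ε' := Real.rpow_pos_of_pos (by positivity) _
      obtain ⟨δ, hδ0, hδ⟩ := huc ε' hε'0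
      refine ⟨δ, hδ0, ?_⟩
      intro a ha hab
      rw [Set.mem_Icc] at ha hb
      have hmain : ∀ x y : ℝ, 0 ≤ x → x ≤ y → y ≤ T → |y - x| < δ →
          ‖XXf 0 y - XXf 0 x‖ < ε := by
        intro x y hx hxy hyT hd
        have h1 : ((x,y) : ℝ×ℝ) ∈ Δ := ⟨hx, hxy, hyT⟩
        have h2 : ((x,x) : ℝ×ℝ) ∈ Δ := ⟨hx, le_rfl, le_trans hxy hyT⟩
        have h3 : dist ((x,y):ℝ×ℝ) ((x,x):ℝ×ℝ) < δ := by
          rw [Prod.dist_eq]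
          simp only [dist_self, Real.dist_eq]
          rw [max_eq_right (abs_nonneg _)]
          exact hd
        have h4 := hδ (x,y) h1 (x,x) h2 h3
        have h4' : |ω x y - ω x x| < ε' := by simpa [Real.dist_eq] using h4
        rw [hω0 x hx (le_trans hxy hyT), sub_zero] at h4'
        have hωxy := hnn x y hx hxy hyT
        have h5 : ω x y ^ ((1:ℝ)/p) ≤ ε' ^ ((1:ℝ)/p) :=
          Real.rpow_le_rpow hωxy (le_of_lt (lt_of_abs_lt h4')) (by positivity)
        have h6 : ε' ^ ((1:ℝ)/p) = ε / (A+1) := by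
          rw [hε'def, ← Real.rpow_mul (by positivity),
            show p * ((1:ℝ)/p) = 1 by field_simp, Real.rpow_one]
        have h9 : (A+1) * (ε/(A+1)) = ε := by field_simp
        have h7 : A * (ε / (A+1)) < ε := by
          calc A * (ε/(A+1)) < (A+1) * (ε/(A+1)) :=
              mul_lt_mul_of_pos_right (lt_add_one A) (by positivity)
            _ = ε := h9
        calc ‖XXf 0 y - XXf 0 x‖ ≤ A * ω x y ^ ((1:ℝ)/p) := hF x y hx hxy hyT
          _ ≤ A * ε' ^ ((1:ℝ)/p) := mul_le_mul_of_nonneg_left h5 hA0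
          _ = A * (ε / (A+1)) := by rw [h6]
          _ < ε := h7
      rcases le_total a b with hab' | hab'
      · rw [dist_eq_norm, norm_sub_rev]
        exact hmain a b ha.1 hab' hb.2
          (by rw [Real.dist_eq] at hab; rwa [abs_sub_comm])
      · rw [dist_eq_norm]
        exact hmain b a hb.1 hab' ha.2 (by rwa [Real.dist_eq] at hab)
    have hmapsfst : Set.MapsTo (fun qp : ℝ×ℝ => qp.1) Δ (Icc 0 T) :=
      fun qp h => ⟨h.1, le_trans h.2.1 h.2.2⟩
    have hmapssnd : Set.MapsTo (fun qp : ℝ×ℝ => qp.2) Δ (Icc 0 T) :=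
      fun qp h => ⟨le_trans h.1 h.2.1, h.2.2⟩
    have hXα : ∀ α : Fin d, ContinuousOn (fun x => X x α) (Icc 0 T) :=
      fun α => (continuous_apply α).comp_continuousOn hXcont
    have hMfc : ContinuousOn (fun qp : ℝ × ℝ => Sew.Mf X 0 qp.1 qp.2) Δ := by
      rw [continuousOn_pi]
      intro α
      rw [continuousOn_pi]
      intro β
      show ContinuousOn (fun qp : ℝ×ℝ => (X qp.1 α - X 0 α) * (X qp.2 β - X qp.1 β)) Δ
      have h1 : ContinuousOn (fun qp : ℝ×ℝ => X qp.1 α) Δ :=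
        (hXα α).comp continuous_fst.continuousOn hmapsfst
      have h2 : ContinuousOn (fun qp : ℝ×ℝ => X qp.2 β) Δ :=
        (hXα β).comp continuous_snd.continuousOn hmapssnd
      have h3 : ContinuousOn (fun qp : ℝ×ℝ => X qp.1 β) Δ :=
        (hXα β).comp continuous_fst.continuousOn hmapsfst
      exact (h1.sub continuousOn_const).mul (h2.sub h3)
    have heq : Set.EqOn (fun qp : ℝ × ℝ => XXf qp.1 qp.2)
        (fun qp : ℝ × ℝ => XXf 0 qp.2 - XXf 0 qp.1 - Sew.Mf X 0 qp.1 qp.2) Δ := by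
      intro qp hqp
      show XXf qp.1 qp.2 = XXf 0 qp.2 - XXf 0 qp.1 - Sew.Mf X 0 qp.1 qp.2
      rw [hchenXX 0 qp.1 qp.2 le_rfl hqp.1 hqp.2.1 hqp.2.2]
      abel
    refine ContinuousOn.congr ?_ heq
    exact ((hFcont.comp continuous_snd.continuousOn hmapssnd).sub
      (hFcont.comp continuous_fst.continuousOn hmapsfst)).sub hMfc
  -- assemble the result
  refine ⟨XXf, ⟨⟨hXcont, CX₀, hCX₀⟩, hcontXX, ⟨C₂, hC₂⟩, ?_⟩,
    ⟨K, fun s t h0 hst hT' => hclose s t h0 hst hT'⟩, ?_, ?_⟩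
  · intro s u t h0 hsu hut hT' α β
    have h := congrFun (congrFun (hchenXX s u t h0 hsu hut hT') α) β
    simpa [Sew.Mf] using h
  · -- uniqueness
    intro XX' hRP' hcl' s t h0 hst hT'
    obtain ⟨C'', hC''⟩ := hcl'
    obtain ⟨_, _, _, hchen''⟩ := hRP'
    have hchenF' : ∀ a u b : ℝ, 0 ≤ a → a ≤ u → u ≤ b → b ≤ T →
        XX' a b = XX' a u + Sew.Mf X a u b + XX' u b := by
      intro a u b h1 h2 h3 h4
      funext α β
      have h := hchen'' a u b h1 h2 h3 h4 α β
      simpa [Sew.Mf] using h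
    set L : ℝ := max (C'' + K) 0 with hL
    have hL0 : 0 ≤ L := le_max_right _ _
    have hbb : ∀ a b : ℝ, 0 ≤ a → a ≤ b → b ≤ T →
        ‖XX' a b - XXf a b‖ ≤ L * ω a b ^ θ := by
      intro a b h1 h2 h3
      have hωab := hnn a b h1 h2 h3
      have h4 : ‖XX' a b - Xt a b‖ ≤ C'' * ω a b ^ θ := hC'' a b h1 h2 h3
      have h5 := hclose a b h1 h2 h3
      have h6 : ‖XX' a b - XXf a b‖ ≤ ‖XX' a b - Xt a b‖ + ‖XXf a b - Xt a b‖ := by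
        have h7 := norm_sub_le (XX' a b - Xt a b) (XXf a b - Xt a b)
        have e : (XX' a b - Xt a b) - (XXf a b - Xt a b) = XX' a b - XXf a b := by abel
        rwa [e] at h7
      have h8 : (C'' + K) * ω a b ^ θ ≤ L * ω a b ^ θ :=
        mul_le_mul_of_nonneg_right (le_max_left _ _) (Real.rpow_nonneg hωab _)
      linarith
    have hadd : ∀ a u b : ℝ, 0 ≤ a → a ≤ u → u ≤ b → b ≤ T →
        (XX' a b - XXf a b) = (XX' a u - XXf a u) + (XX' u b - XXf u b) := by
      intro a u b h1 h2 h3 h4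
      rw [hchenF' a u b h1 h2 h3 h4, hchenXX a u b h1 h2 h3 h4]; abel
    have h9 := Sew.rigid hcont hω0 hsup hnn hθ
      (fun a b => XX' a b - XXf a b) L hL0 hbb hadd s t h0 hst hT'
    exact sub_eq_zero.1 h9
  · -- geometric
    intro hsym s t h0 hst hT' α β
    set L : ℝ := max (C + 2*K) 0 with hL
    have hL0 : 0 ≤ L := le_max_right _ _
    have hco : ∀ (a b : ℝ), 0 ≤ a → a ≤ b → b ≤ T → ∀ γ δ : Fin d,
        |XXf a b γ δ - Xt a b γ δ| ≤ K * ω a b ^ θ := by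
      intro a b h1 h2 h3 γ δ
      have h6 : |(XXf a b - Xt a b) γ δ| ≤ ‖XXf a b - Xt a b‖ := by
        refine le_trans ?_ (norm_le_pi_norm (XXf a b - Xt a b) γ)
        simpa [Real.norm_eq_abs] using norm_le_pi_norm ((XXf a b - Xt a b) γ) δ
      simpa [Pi.sub_apply] using le_trans h6 (hclose a b h1 h2 h3)
    have hbb : ∀ a b : ℝ, 0 ≤ a → a ≤ b → b ≤ T →
        ‖bracket X XXf a b α β‖ ≤ L * ω a b ^ θ := by
      intro a b h1 h2 h3
      have hωab := hnn a b h1 h2 h3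
      have h4 := hsym a b h1 h2 h3 α β
      have h5 := hco a b h1 h2 h3 α β
      have h5' := hco a b h1 h2 h3 β α
      have hexp : bracket X XXf a b α β =
          ((X b α - X a α) * (X b β - X a β) - Xt a b α β - Xt a b β α)
          - (XXf a b α β - Xt a b α β) - (XXf a b β α - Xt a b β α) := by
        simp only [bracket]; ring
      rw [Real.norm_eq_abs, hexp]
      have htri : |((X b α - X a α) * (X b β - X a β) - Xt a b α β - Xt a b β α)
          - (XXf a b α β - Xt a b α β) - (XXf a b β α - Xt a b β α)|
          ≤ |(X b α - X a α) * (X b β - X a β) - Xt a b α β - Xt a b β α|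
            + |XXf a b α β - Xt a b α β| + |XXf a b β α - Xt a b β α| := by
        calc |_ - (XXf a b α β - Xt a b α β) - (XXf a b β α - Xt a b β α)|
            ≤ |_ - (XXf a b α β - Xt a b α β)| + |XXf a b β α - Xt a b β α| := abs_sub _ _
          _ ≤ |_| + |XXf a b α β - Xt a b α β| + |XXf a b β α - Xt a b β α| := by
              have := abs_sub ((X b α - X a α) * (X b β - X a β) - Xt a b α β - Xt a b β α)
                (XXf a b α β - Xt a b α β)
              linarith
      have h8 : (C + 2*K) * ω a b ^ θ ≤ L * ω a b ^ θ :=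
        mul_le_mul_of_nonneg_right (le_max_left _ _) (Real.rpow_nonneg hωab _)
      linarith
    have hadd : ∀ a u b : ℝ, 0 ≤ a → a ≤ u → u ≤ b → b ≤ T →
        bracket X XXf a b α β = bracket X XXf a u α β + bracket X XXf u b α β := by
      intro a u b h1 h2 h3 h4
      have hα := congrFun (congrFun (hchenXX a u b h1 h2 h3 h4) α) β
      have hβ := congrFun (congrFun (hchenXX a u b h1 h2 h3 h4) β) α
      simp only [Pi.add_apply, Sew.Mf] at hα hβ
      simp only [bracket]
      rw [hα, hβ]; ring
    exact Sew.rigid (E := ℝ) hcont hω0 hsup hnn hθ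
      (fun a b => bracket X XXf a b α β) L hL0 hbb hadd s t h0 hst hT'
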